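/- On a surface of revolution in ℝ³ generated by revolving a regular profile curve about the x-axis, along any geodesic γ the quantity r(t)·cos(θ(t)) is constant, where r(t) is the distance from γ(t) to the axis of revolution and θ(t) is the angle between γ'(t) and the parallel circle through γ(t) (Clairaut's relation). -/

import Mathlib

/-- **Clairaut's relation.** On a surface of revolution with induced metric
`ds² + f(s)² dφ²` (profile curve at distance `f(s) > 0` from the axis, parameterized by arc
length), let `γ(t) = (s(t), φ(t))` be a unit-speed geodesic, i.e. a solution of the geodesic
equations
  `s'' = f(s) f'(s) (φ')²`,  `f(s) φ'' = -2 f'(s) s' φ'`,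
with `(s')² + f(s)² (φ')² = 1`.  The radius of the parallel through `γ(t)` is `r(t) = f(s t)`
and the cosine of the angle `θ(t)` between `γ'(t)` and that parallel is `f(s t) * φ'(t)`.
Then the quantity `r(t) · cos θ(t) = f(s t) * (f(s t) * φ'(t))` is constant along `γ`. -/
theorem clairaut_relation
    (f : ℝ → ℝ) (hf : ContDiff ℝ 2 f) (hfpos : ∀ x, 0 < f x)
    (s φ : ℝ → ℝ) (hs : ContDiff ℝ 2 s) (hφ : ContDiff ℝ 2 φ)
    (hgeo₁ : ∀ t, deriv (deriv s) t = f (s t) * deriv f (s t) * (deriv φ t) ^ 2)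
    (hgeo₂ : ∀ t, f (s t) * deriv (deriv φ) t = -2 * deriv f (s t) * deriv s t * deriv φ t)
    (hunit : ∀ t, (deriv s t) ^ 2 + (f (s t)) ^ 2 * (deriv φ t) ^ 2 = 1) :
    ∀ t₁ t₂ : ℝ,
      f (s t₁) * (f (s t₁) * deriv φ t₁) = f (s t₂) * (f (s t₂) * deriv φ t₂) := by
  have hφ' : ContDiff ℝ 1 (deriv φ) := by
    have h2 : ContDiff ℝ ((1:ℕ∞) + 1) φ := by exact_mod_cast hφ
    exact (contDiff_succ_iff_deriv.mp h2).2.2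
  have key : ∀ t, HasDerivAt (fun t => f (s t) * (f (s t) * deriv φ t)) 0 t := by
    intro t
    have hsd : HasDerivAt s (deriv s t) t :=
      ((hs.differentiable two_ne_zero) t).hasDerivAt
    have hfd : HasDerivAt f (deriv f (s t)) (s t) :=
      ((hf.differentiable two_ne_zero) (s t)).hasDerivAt
    have hfs : HasDerivAt (fun t => f (s t)) (deriv f (s t) * deriv s t) t :=
      hfd.comp t hsd
    have hφd : HasDerivAt (deriv φ) (deriv (deriv φ) t) t :=
      ((hφ'.differentiable one_ne_zero) t).hasDerivAt
    have hprod : HasDerivAt (fun t => f (s t) * (f (s t) * deriv φ t))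
        (deriv f (s t) * deriv s t * (f (s t) * deriv φ t)
          + f (s t) * (deriv f (s t) * deriv s t * deriv φ t
            + f (s t) * deriv (deriv φ) t)) t :=
      hfs.mul (hfs.mul hφd)
    have h2 := hgeo₂ t
    have : deriv f (s t) * deriv s t * (f (s t) * deriv φ t)
        + f (s t) * (deriv f (s t) * deriv s t * deriv φ t
          + f (s t) * deriv (deriv φ) t) = 0 := by
      linear_combination f (s t) * h2
    rwa [this] at hprod
  intro t₁ t₂
  exact is_const_of_deriv_eq_zero
    (fun t => ((key t).differentiableAt))
    (fun t => (key t).deriv) t₁ t₂
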